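/- arXiv:1212.1378 — 2 statements merged into one kernel-verified Lean document; each statement's English description precedes it below -/
import Mathlib

section
/- For every integer N ≥ 3, the operators e_j (1 ≤ j ≤ N−1) on ℂ^{2^N} satisfy the Temperley–Lieb relations at zero fugacity: e_j² = 0 for all 1 ≤ j ≤ N−1; e_j e_{j+1} e_j = e_j and e_{j+1} e_j e_{j+1} = e_{j+1} for all 1 ≤ j ≤ N−2; and e_i e_j = e_j e_i whenever |i−j| > 1. -/
open Matrix Complex BigOperators Finset

noncomputable section

namespace LatticeW

/-- basis states of the chain of `N` spin-1/2 sites -/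
abbrev St (N : ℕ) := Fin N → Fin 2
/-- operators on `ℂ^{2^N}` -/
abbrev Op (N : ℕ) := Matrix (St N) (St N) ℂ

def σx : Matrix (Fin 2) (Fin 2) ℂ := !![0, 1; 1, 0]
def σy : Matrix (Fin 2) (Fin 2) ℂ := !![0, -Complex.I; Complex.I, 0]
def σz : Matrix (Fin 2) (Fin 2) ℂ := !![1, 0; 0, -1]
def σp : Matrix (Fin 2) (Fin 2) ℂ := (1/2 : ℂ) • (σx + Complex.I • σy)
def σm : Matrix (Fin 2) (Fin 2) ℂ := (1/2 : ℂ) • (σx - Complex.I • σy)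

/-- the operator acting as `M` on the (0-indexed) site `j` and as the identity
elsewhere; junk value `0` if `j` is out of range. -/
def site (N : ℕ) (j : ℕ) (M : Matrix (Fin 2) (Fin 2) ℂ) : Op N :=
  if h : j < N then
    (fun v w => if ∀ l, l ≠ (⟨j, h⟩ : Fin N) → v l = w l then M (v ⟨j, h⟩) (w ⟨j, h⟩) else 0)
  else 0

/-- diagonal value of σ^z on a one-site basis state -/
def zval (t : Fin 2) : ℂ := if t = 0 then 1 else -1

/-- Jordan–Wigner creation operator `c_j†` (0-indexed `j`; paper index `j+1`):
`c_j† = i^{j} (∏_{l<j} i σ^z_l) σ^+_j`. -/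
def ad (N : ℕ) (j : ℕ) : Op N :=
  Complex.I ^ j •
    (Matrix.diagonal (fun v : St N =>
        ∏ l ∈ Finset.univ.filter (fun l : Fin N => (l : ℕ) < j), (Complex.I * zval (v l)))
      * site N j σp)

/-- Jordan–Wigner annihilation operator `c_j` (0-indexed `j`):
`c_j = i^{-j} (∏_{l<j} (i σ^z_l)⁻¹) σ^-_j`. -/
def an (N : ℕ) (j : ℕ) : Op N :=
  (Complex.I ^ j)⁻¹ •
    (Matrix.diagonal (fun v : St N =>
        ∏ l ∈ Finset.univ.filter (fun l : Fin N => (l : ℕ) < j), (Complex.I * zval (v l))⁻¹)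
      * site N j σm)

/-- Temperley–Lieb density `e_{j+1}` of the paper (0-indexed `j`). -/
def eTL (N : ℕ) (j : ℕ) : Op N :=
  an N j * ad N (j+1) + an N (j+1) * ad N j
    + Complex.I • (ad N j * an N j - ad N (j+1) * an N (j+1))

/-- the XX Hamiltonian `H = -∑ e_j`. -/
def Hop (N : ℕ) : Op N := -∑ j ∈ Finset.range (N - 1), eTL N j

/-- `ρ(K) = ⊗_j (i σ^z)`. -/
def Kop (N : ℕ) : Op N := Matrix.diagonal (fun v : St N => ∏ l, (Complex.I * zval (v l)))

/-- `ρ(E) = (∑_{j=1}^N i^j c_j†) ρ(K)` (paper indices). -/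
def Eop (N : ℕ) : Op N := (∑ j ∈ Finset.range N, Complex.I ^ (j+1) • ad N j) * Kop N

/-- `ρ(F) = ∑_{j=1}^N i^{j-1} c_j` (paper indices). -/
def Fop (N : ℕ) : Op N := ∑ j ∈ Finset.range N, Complex.I ^ j • an N j

/-- divided power `ρ(e) = ∑_{j1<j2} (-1)^{j1+j2} i^{1-j1-j2} c_{j1}† c_{j2}†` (paper indices). -/
def sl2e (N : ℕ) : Op N :=
  ∑ j2 ∈ Finset.range N, ∑ j1 ∈ Finset.range j2,
    ((-1 : ℂ) ^ (j1 + j2) * (Complex.I ^ (j1 + j2 + 1))⁻¹) • (ad N j1 * ad N j2)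

/-- divided power `ρ(f) = ∑_{j1<j2} i^{j1+j2-1} c_{j1} c_{j2}` (paper indices). -/
def sl2f (N : ℕ) : Op N :=
  ∑ j2 ∈ Finset.range N, ∑ j1 ∈ Finset.range j2,
    (Complex.I ^ (j1 + j2 + 1)) • (an N j1 * an N j2)

/-- `WB^+_{j+1}` of the paper (0-indexed `j`). -/
def WBp (N : ℕ) (j : ℕ) : Op N :=
  (-1 : ℂ) ^ (j+1) •
    (ad N j * ad N (j+1) + Complex.I • (ad N j * ad N (j+2)) - ad N (j+1) * ad N (j+2))

/-- `WB^0_{j+1}` of the paper (0-indexed `j`). -/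
def WB0 (N : ℕ) (j : ℕ) : Op N :=
  (-(1/2) : ℂ) •
    ((1 : Op N) + Complex.I • (ad N j * an N (j+1)) - ad N j * an N (j+2)
      + Complex.I • (ad N (j+1) * an N j) - (2 : ℂ) • (ad N (j+1) * an N (j+1))
      - Complex.I • (ad N (j+1) * an N (j+2)) - ad N (j+2) * an N j
      - Complex.I • (ad N (j+2) * an N (j+1)))

/-- `WB^-_{j+1}` of the paper (0-indexed `j`). -/
def WBm (N : ℕ) (j : ℕ) : Op N :=
  (-1 : ℂ) ^ j •
    (an N j * an N (j+1) + Complex.I • (an N j * an N (j+2)) - an N (j+1) * an N (j+2))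

/-- `WB^α_j` with `α = 0 ↦ +`, `α = 1 ↦ 0`, `α = 2 ↦ -`. -/
def WB (N : ℕ) (α : Fin 3) (j : ℕ) : Op N :=
  match α with
  | 0 => WBp N j
  | 1 => WB0 N j
  | 2 => WBm N j

/-- the Fourier amplitudes `A_k(j)` (both `k` and `j` paper-indexed). -/
def Afun (N k j : ℕ) : ℂ :=
  (1/2 : ℂ) * (1 + Complex.I * Complex.exp (-(Complex.I * (Real.pi : ℂ) * (k : ℂ) / (N : ℂ))))
      * Complex.exp (Complex.I * (Real.pi : ℂ) * (k : ℂ) * (j : ℂ) / (N : ℂ))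
  - (1/2 : ℂ) * (1 + Complex.I * Complex.exp (Complex.I * (Real.pi : ℂ) * (k : ℂ) / (N : ℂ)))
      * Complex.exp (-(Complex.I * (Real.pi : ℂ) * (k : ℂ) * (j : ℂ) / (N : ℂ)))

/-- `θ†_k = ∑_{j=1}^N A_k(j) c_j†` (paper indices). -/
def θd (N k : ℕ) : Op N := ∑ j ∈ Finset.range N, Afun N k (j+1) • ad N j

/-- `θ_k = -i ∑_{j=1}^N A_k(j) c_j` (paper indices). -/
def θa (N k : ℕ) : Op N := (-Complex.I) • ∑ j ∈ Finset.range N, Afun N k (j+1) • an N j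

/-- the normalization `sqrt(n/(N sin(πn/N)))` for `n ≠ 0`, and `1/√π` for `n = 0`. -/
def ηcoef (N : ℕ) (n : ℤ) : ℂ :=
  if n = 0 then ((Real.sqrt Real.pi)⁻¹ : ℝ)
  else ((Real.sqrt ((n : ℝ) / ((N : ℝ) * Real.sin (Real.pi * (n : ℝ) / (N : ℝ)))) : ℝ) : ℂ)

/-- `η^+_n` -/
def ηp (N : ℕ) (n : ℤ) : Op N := ηcoef N n • θd N ((N : ℤ)/2 + n).toNat

/-- `η^-_n` -/
def ηm (N : ℕ) (n : ℤ) : Op N := ηcoef N n • θa N ((N : ℤ)/2 - n).toNat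

/-- coefficient `(N/2 - j + (1-(-1)^j)/2) i^j` (paper index `j`). -/
def γcoef (N j : ℕ) : ℂ :=
  ((N : ℂ)/2 - (j : ℂ) + (1 - (-1 : ℂ)^j)/2) * Complex.I ^ j

/-- the root vector `γ^+`. -/
def γp (N : ℕ) : Op N :=
  (Complex.I * (Real.sqrt Real.pi : ℂ) / (N : ℂ)) •
    ∑ j ∈ Finset.range N, γcoef N (j+1) • ad N j

/-- the root vector `γ^-`. -/
def γm (N : ℕ) : Op N :=
  (-((Real.sqrt Real.pi : ℂ) / (N : ℂ))) •
    ∑ j ∈ Finset.range N, γcoef N (j+1) • an N j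

/-- Kronecker delta -/
def kδ (a b : ℤ) : ℂ := if a = b then 1 else 0

/-- `s(j) = sqrt(sin(πj/N)/j)` with the convention `π/N` at `j = 0`. -/
def sfun (N : ℕ) (j : ℤ) : ℂ :=
  if j = 0 then ((Real.sqrt (Real.pi / (N : ℝ)) : ℝ) : ℂ)
  else ((Real.sqrt (Real.sin (Real.pi * (j : ℝ) / (N : ℝ)) / (j : ℝ)) : ℝ) : ℂ)

/-- the index range `-N/2+1 ≤ j ≤ N/2-1`. -/
def modeRange (N : ℕ) : Finset ℤ := Finset.Icc (-(N : ℤ)/2 + 1) ((N : ℤ)/2 - 1)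

/-- the coefficient appearing in `Ĥ^r_n`. -/
def Hcoef (N : ℕ) (r : ℕ) (n j1 j2 : ℤ) : ℂ :=
  ((Real.cos (Real.pi * ((j1 - j2 : ℤ) : ℝ) / (2 * (N : ℝ))) : ℝ) : ℂ)^r *
      ((-1 : ℂ)^r * kδ (j1 + j2) n + kδ (j1 + j2) (-n))
    - ((Real.sin (Real.pi * ((j1 + j2 : ℤ) : ℝ) / (2 * (N : ℝ))) : ℝ) : ℂ)^r *
      (kδ (j1 - j2) ((N : ℤ) + n) + kδ (j1 - j2) (-(N : ℤ) - n)
        + (-1 : ℂ)^r * kδ (j1 - j2) ((N : ℤ) - n) + (-1 : ℂ)^r * kδ (j1 - j2) (-(N : ℤ) + n))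

/-- the lattice Virasoro mode `Ĥ^r_n`. -/
def Hhat (N : ℕ) (r : ℕ) (n : ℤ) : Op N :=
  ∑ j1 ∈ modeRange N, ∑ j2 ∈ modeRange N,
    (sfun N j1 * sfun N j2 * Hcoef N r n j1 j2) • (ηp N j1 * ηm N j2)

/-- the coefficient `U_{r,n}(j1,j2)`. -/
def Ucoef (N : ℕ) (r : ℕ) (n j1 j2 : ℤ) : ℂ :=
  ((Real.sin (Real.pi * ((j1 - j2 : ℤ) : ℝ) / (2 * (N : ℝ))) : ℝ) : ℂ)
      * ((Real.cos (Real.pi * ((j1 - j2 : ℤ) : ℝ) / (2 * (N : ℝ))) : ℝ) : ℂ)^r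
      * ((-1 : ℂ)^r * kδ (j1 + j2) n + kδ (j1 + j2) (-n))
    + 2 * ((Real.cos (Real.pi * ((j1 + j2 : ℤ) : ℝ) / (2 * (N : ℝ))) : ℝ) : ℂ)
      * ((Real.sin (Real.pi * ((j1 + j2 : ℤ) : ℝ) / (2 * (N : ℝ))) : ℝ) : ℂ)^r
      * (kδ (j1 - j2) (-(N : ℤ) - n) + (-1 : ℂ)^r * kδ (j1 - j2) (-(N : ℤ) + n))

/-- the lattice W-algebra mode `Ŵ^{α,r}_n` with `α = 0 ↦ +`, `α = 1 ↦ 0`, `α = 2 ↦ -`. -/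
def What (N : ℕ) (α : Fin 3) (r : ℕ) (n : ℤ) : Op N :=
  ∑ j1 ∈ modeRange N, ∑ j2 ∈ modeRange N,
    (sfun N j1 * sfun N j2 * Ucoef N r n j1 j2) •
      (match α with
        | 0 => ηp N j1 * ηp N j2
        | 1 => ηp N j1 * ηm N j2 + ηm N j1 * ηp N j2
        | 2 => ηm N j1 * ηm N j2)

/-- the all-spins-down reference state. -/
def downSt (N : ℕ) : St N → ℂ := fun v => if ∀ j, v j = 1 then 1 else 0

/-- the vacuum `|0⟩ = θ†_{N/2} θ†_{N/2+1} ⋯ θ†_{N-1} |↓…↓⟩`. -/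
def vac (N : ℕ) : St N → ℂ :=
  (((List.range (N/2)).map (fun t => θd N (N/2 + t))).prod).mulVec (downSt N)

/-- the logarithmic partner `|0̃⟩ = γ^+ θ†_{N/2+1} ⋯ θ†_{N-1} |↓…↓⟩`. -/
def vacTilde (N : ℕ) : St N → ℂ :=
  (γp N * (((List.range (N/2 - 1)).map (fun t => θd N (N/2 + 1 + t))).prod)).mulVec (downSt N)

/-- the total spin `S^z = ½ ∑_j σ^z_j`. -/
def Sz (N : ℕ) : Op N := (1/2 : ℂ) • ∑ j ∈ Finset.range N, site N j σz

/- ************ XXZ spin-chain at generic q (statement 19) ************ -/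

/-- the single-site diagonal `diag(q, q⁻¹)` evaluated on a basis state. -/
def dq (q : ℂ) : Fin 2 → ℂ := fun t => if t = 0 then q else q⁻¹

/-- the XXZ Temperley–Lieb density `e_{i+1}` of the paper (0-indexed `i`). -/
def eXXZ (N : ℕ) (q : ℂ) (i : ℕ) : Op N :=
  ((q + q⁻¹)/4) • (1 : Op N)
    - (1/2 : ℂ) • (site N i σx * site N (i+1) σx + site N i σy * site N (i+1) σy)
    - ((q + q⁻¹)/4) • (site N i σz * site N (i+1) σz)
    + ((q - q⁻¹)/4) • (site N i σz - site N (i+1) σz)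

/-- the XXZ Hamiltonian with quantum-group symmetric boundary terms. -/
def HXXZ (N : ℕ) (q : ℂ) : Op N :=
  (1/2 : ℂ) • ∑ i ∈ Finset.range (N - 1),
      (site N i σx * site N (i+1) σx + site N i σy * site N (i+1) σy
        + ((q + q⁻¹)/2) • (site N i σz * site N (i+1) σz))
    - ((q - q⁻¹)/4) • (site N 0 σz - site N (N-1) σz)

/-- `K_N = ⊗_j diag(q,q⁻¹)`. -/
def KXXZ (N : ℕ) (q : ℂ) : Op N := Matrix.diagonal (fun v : St N => ∏ l, dq q (v l))

/-- `E_N = ∑_j σ^+_j ⊗ ∏_{l>j} diag(q,q⁻¹)_l`. -/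
def EXXZ (N : ℕ) (q : ℂ) : Op N :=
  ∑ j ∈ Finset.range N,
    site N j σp *
      Matrix.diagonal (fun v : St N =>
        ∏ l ∈ Finset.univ.filter (fun l : Fin N => j < (l : ℕ)), dq q (v l))

/-- `F_N = ∑_j (∏_{l<j} diag(q⁻¹,q)_l) ⊗ σ^-_j`. -/
def FXXZ (N : ℕ) (q : ℂ) : Op N :=
  ∑ j ∈ Finset.range N,
    Matrix.diagonal (fun v : St N =>
        ∏ l ∈ Finset.univ.filter (fun l : Fin N => (l : ℕ) < j), (dq q (v l))⁻¹) *
      site N j σm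


section Aux
variable {N : ℕ}

def nmat : Matrix (Fin 2) (Fin 2) ℂ := !![1,0;0,0]

lemma σp_eq : σp = !![0,1;0,0] := by
  ext i j
  fin_cases i <;> fin_cases j <;>
    simp [σp, σx, σy, Matrix.smul_apply, Complex.I_mul_I] <;> ring_nf <;>
    simp [Complex.I_sq]

lemma σm_eq : σm = !![0,0;1,0] := by
  ext i j
  fin_cases i <;> fin_cases j <;>
    simp [σm, σx, σy, Matrix.smul_apply, Complex.I_mul_I] <;> ring_nf <;>
    simp [Complex.I_sq]

lemma σz_diag : σz = Matrix.diagonal zval := by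
  ext i j
  fin_cases i <;> fin_cases j <;> simp [σz, zval, Matrix.diagonal]

variable {N : ℕ}


lemma eq_of_agree {p : Fin N} {v w : St N} (hc : ∀ l, l ≠ p → v l = w l)
    (he : v p = w p) : v = w :=
  funext fun l => by rcases eq_or_ne l p with rfl | h; exacts [he, hc l h]

lemma site_of_ge {j : ℕ} (h : N ≤ j) (M : Matrix (Fin 2) (Fin 2) ℂ) :
    site N j M = 0 := by
  rw [site]; exact dif_neg (by omega)

lemma site_apply {j : ℕ} (h : j < N) (M : Matrix (Fin 2) (Fin 2) ℂ) (v w : St N) :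
    site N j M v w =
      if ∀ l, l ≠ (⟨j, h⟩ : Fin N) → v l = w l then M (v ⟨j, h⟩) (w ⟨j, h⟩) else 0 := by
  rw [site]; exact congrFun (congrFun (dif_pos h (t := fun h : j < N => ((fun v w => if ∀ l, l ≠ (⟨j, h⟩ : Fin N) → v l = w l then M (v ⟨j, h⟩) (w ⟨j, h⟩) else 0) : St N → St N → ℂ)) (e := fun _ => (0 : St N → St N → ℂ))) v) w

lemma site_zero (j : ℕ) : site N j (0 : Matrix (Fin 2) (Fin 2) ℂ) = 0 := by
  by_cases h : j < N
  · ext v w; rw [site_apply h]; simp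
  · rw [site_of_ge (by omega)]

lemma site_smul (j : ℕ) (c : ℂ) (M : Matrix (Fin 2) (Fin 2) ℂ) :
    site N j (c • M) = c • site N j M := by
  by_cases h : j < N
  · ext v w; rw [site_apply h]; simp [site_apply h, apply_ite (c • ·)]
  · rw [site_of_ge (by omega), site_of_ge (by omega)]; simp

lemma site_add (j : ℕ) (A B : Matrix (Fin 2) (Fin 2) ℂ) :
    site N j (A + B) = site N j A + site N j B := by
  by_cases h : j < N
  · ext v w; simp only [Matrix.add_apply, site_apply h]
    split <;> simp
  · simp [site_of_ge (le_of_not_gt h)]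

lemma site_sub (j : ℕ) (A B : Matrix (Fin 2) (Fin 2) ℂ) :
    site N j (A - B) = site N j A - site N j B := by
  by_cases h : j < N
  · ext v w; simp only [Matrix.sub_apply, site_apply h]
    split <;> simp
  · simp [site_of_ge (le_of_not_gt h)]

lemma site_one {j : ℕ} (h : j < N) : site N j (1 : Matrix (Fin 2) (Fin 2) ℂ) = 1 := by
  ext v w
  rw [site_apply h]
  by_cases hvw : v = w
  · subst hvw; simp [Matrix.one_apply]
  · rw [Matrix.one_apply_ne hvw]
    by_cases hc : ∀ l, l ≠ (⟨j, h⟩ : Fin N) → v l = w l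
    · rw [if_pos hc, Matrix.one_apply]
      have : v ⟨j, h⟩ ≠ w ⟨j, h⟩ := fun he => hvw (eq_of_agree hc he)
      rw [if_neg this]
    · rw [if_neg hc]

lemma site_diagonal {j : ℕ} (h : j < N) (f : Fin 2 → ℂ) :
    site N j (Matrix.diagonal f) = Matrix.diagonal (fun v : St N => f (v ⟨j, h⟩)) := by
  ext v w
  rw [site_apply h]
  by_cases hvw : v = w
  · subst hvw; simp
  · rw [Matrix.diagonal_apply_ne _ hvw]
    by_cases hc : ∀ l, l ≠ (⟨j, h⟩ : Fin N) → v l = w l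
    · rw [if_pos hc, Matrix.diagonal_apply_ne _ (fun he => hvw (eq_of_agree hc he))]
    · rw [if_neg hc]

lemma site_mul_same  (j : ℕ) (A B : Matrix (Fin 2) (Fin 2) ℂ) :
    site N j A * site N j B = site N j (A * B) := by
  by_cases h : j < N
  · ext v w
    rw [Matrix.mul_apply, site_apply h]
    have himg : ∑ u ∈ Finset.univ.image (fun t : Fin 2 => Function.update v ⟨j, h⟩ t),
        site N j A v u * site N j B u w
        = ∑ t : Fin 2, site N j A v (Function.update v ⟨j, h⟩ t)
            * site N j B (Function.update v ⟨j, h⟩ t) w := by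
      apply Finset.sum_image
      intro a _ b _ hab
      have := congrFun hab ⟨j, h⟩
      simpa using this
    have hsub : ∑ u : St N, site N j A v u * site N j B u w
        = ∑ u ∈ Finset.univ.image (fun t : Fin 2 => Function.update v ⟨j, h⟩ t),
            site N j A v u * site N j B u w := by
      symm
      apply Finset.sum_subset (Finset.subset_univ _)
      intro u _ hu
      rw [site_apply h, if_neg, zero_mul]
      intro hcon
      apply hu
      simp only [Finset.mem_image, Finset.mem_univ, true_and]
      refine ⟨u ⟨j, h⟩, ?_⟩
      symm
      apply eq_of_agree (p := (⟨j, h⟩ : Fin N)) (w := Function.update v ⟨j, h⟩ (u ⟨j, h⟩))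
      · intro l hl
        rw [Function.update_of_ne hl]
        exact (hcon l hl).symm
      · rw [Function.update_self]
    rw [hsub, himg]
    by_cases hc : ∀ l, l ≠ (⟨j, h⟩ : Fin N) → v l = w l
    · rw [if_pos hc, Matrix.mul_apply]
      apply Finset.sum_congr rfl
      intro t _
      rw [site_apply h, site_apply h,
        if_pos (fun l hl => (Function.update_of_ne hl _ _).symm),
        if_pos (fun l hl => by rw [Function.update_of_ne hl]; exact hc l hl)]
      simp
    · rw [if_neg hc]
      apply Finset.sum_eq_zero
      intro t _
      have h2 : ¬ ∀ l, l ≠ (⟨j, h⟩ : Fin N) → Function.update v ⟨j, h⟩ t l = w l := by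
        intro hcon
        exact hc fun l hl => by
          have h1 := hcon l hl
          rwa [Function.update_of_ne hl] at h1
      rw [site_apply h (M := B), if_neg h2, mul_zero]
  · push_neg at h
    rw [site_of_ge h, site_of_ge h, site_of_ge h, zero_mul]

lemma site_mul_apply_ne {j k : ℕ} (hj : j < N) (hk : k < N) (hjk : j ≠ k)
    (A B : Matrix (Fin 2) (Fin 2) ℂ) (v w : St N) :
    (site N j A * site N k B) v w =
      if ∀ l, l ≠ (⟨j, hj⟩ : Fin N) → l ≠ (⟨k, hk⟩ : Fin N) → v l = w l
      then A (v ⟨j, hj⟩) (w ⟨j, hj⟩) * B (v ⟨k, hk⟩) (w ⟨k, hk⟩) else 0 := by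
  have hpq : (⟨j, hj⟩ : Fin N) ≠ ⟨k, hk⟩ := fun h => hjk (by simpa [Fin.ext_iff] using h)
  rw [Matrix.mul_apply]
  rw [Finset.sum_eq_single (Function.update v ⟨j, hj⟩ (w ⟨j, hj⟩))]
  · rw [site_apply hj, site_apply hk]
    rw [if_pos (fun l hl => (Function.update_of_ne hl _ _).symm)]
    by_cases hc : ∀ l, l ≠ (⟨j, hj⟩ : Fin N) → l ≠ (⟨k, hk⟩ : Fin N) → v l = w l
    · rw [if_pos hc, if_pos, Function.update_self, Function.update_of_ne hpq.symm]
      intro l hl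
      rcases eq_or_ne l ⟨j, hj⟩ with rfl | hlp
      · rw [Function.update_self]
      · rw [Function.update_of_ne hlp]; exact hc l hlp hl
    · rw [if_neg hc, if_neg, mul_zero]
      intro hcon
      apply hc
      intro l hlp hlq
      have := hcon l hlq
      rwa [Function.update_of_ne hlp] at this
  · intro u _ hu
    rw [site_apply hj, site_apply hk]
    by_cases h1 : ∀ l, l ≠ (⟨j, hj⟩ : Fin N) → v l = u l
    · by_cases h2 : ∀ l, l ≠ (⟨k, hk⟩ : Fin N) → u l = w l
      · exfalso
        apply hu
        apply eq_of_agree (p := (⟨j, hj⟩ : Fin N))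
        · intro l hl
          rw [Function.update_of_ne hl]
          exact (h1 l hl).symm
        · rw [Function.update_self]
          exact h2 _ hpq
      · rw [if_neg h2, mul_zero]
    · rw [if_neg h1, zero_mul]
  · simp

lemma site_mul_comm {j k : ℕ} (hjk : j ≠ k) (A B : Matrix (Fin 2) (Fin 2) ℂ) :
    site N j A * site N k B = site N k B * site N j A := by
  by_cases hj : j < N
  · by_cases hk : k < N
    · ext v w
      rw [site_mul_apply_ne hj hk hjk, site_mul_apply_ne hk hj (Ne.symm hjk)]
      rw [if_congr (by constructor <;> exact fun hc l h1 h2 => hc l h2 h1) (mul_comm _ _) rfl]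
    · rw [site_of_ge (le_of_not_gt hk), mul_zero, zero_mul]
  · rw [site_of_ge (le_of_not_gt hj), mul_zero, zero_mul]

lemma diagonal_comm_site {j : ℕ} (hj : j < N) (d : St N → ℂ)
    (hd : ∀ (v w : St N), (∀ l, l ≠ (⟨j, hj⟩ : Fin N) → v l = w l) → d v = d w)
    (M : Matrix (Fin 2) (Fin 2) ℂ) :
    Matrix.diagonal d * site N j M = site N j M * Matrix.diagonal d := by
  ext v w
  rw [Matrix.diagonal_mul, Matrix.mul_diagonal, site_apply hj (M := M)]
  by_cases hc : ∀ l, l ≠ (⟨j, hj⟩ : Fin N) → v l = w l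
  · rw [if_pos hc, hd v w hc, mul_comm]
  · rw [if_neg hc, mul_zero, zero_mul]


-- ## string diagonals

def Dstr (N j : ℕ) : Op N :=
  Matrix.diagonal (fun v : St N =>
    ∏ l ∈ Finset.univ.filter (fun l : Fin N => (l : ℕ) < j), (Complex.I * zval (v l)))

def DstrI (N j : ℕ) : Op N :=
  Matrix.diagonal (fun v : St N =>
    ∏ l ∈ Finset.univ.filter (fun l : Fin N => (l : ℕ) < j), (Complex.I * zval (v l))⁻¹)

lemma ad_eq (j : ℕ) : ad N j = Complex.I ^ j • (Dstr N j * site N j σp) := rfl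

lemma an_eq (j : ℕ) : an N j = (Complex.I ^ j)⁻¹ • (DstrI N j * site N j σm) := rfl

lemma Izval_ne_zero (t : Fin 2) : Complex.I * zval t ≠ 0 := by
  fin_cases t <;> simp [zval, Complex.I_ne_zero]

lemma Dstr_comm_site {j k : ℕ} (hk : k < N) (hjk : j ≤ k) (M : Matrix (Fin 2) (Fin 2) ℂ) :
    Dstr N j * site N k M = site N k M * Dstr N j := by
  apply diagonal_comm_site hk
  intro v w hvw
  apply Finset.prod_congr rfl
  intro l hl
  simp only [Finset.mem_filter, Finset.mem_univ, true_and] at hl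
  have hlk : l ≠ (⟨k, hk⟩ : Fin N) := by
    intro he
    rw [he] at hl
    simp only [Fin.val_mk] at hl
    omega
  rw [hvw l hlk]

lemma DstrI_comm_site {j k : ℕ} (hk : k < N) (hjk : j ≤ k) (M : Matrix (Fin 2) (Fin 2) ℂ) :
    DstrI N j * site N k M = site N k M * DstrI N j := by
  apply diagonal_comm_site hk
  intro v w hvw
  apply Finset.prod_congr rfl
  intro l hl
  simp only [Finset.mem_filter, Finset.mem_univ, true_and] at hl
  have hlk : l ≠ (⟨k, hk⟩ : Fin N) := by
    intro he
    rw [he] at hl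
    simp only [Fin.val_mk] at hl
    omega
  rw [hvw l hlk]

lemma Dstr_mul_DstrI (j : ℕ) : Dstr N j * DstrI N j = 1 := by
  rw [Dstr, DstrI, Matrix.diagonal_mul_diagonal,
    show (1 : Op N) = Matrix.diagonal (fun _ => 1) from Matrix.diagonal_one.symm]
  refine congrArg _ (funext fun v => ?_)
  rw [← Finset.prod_mul_distrib]
  exact Finset.prod_eq_one fun l _ => mul_inv_cancel₀ (Izval_ne_zero _)

lemma DstrI_mul_Dstr (j : ℕ) : DstrI N j * Dstr N j = 1 := by
  rw [Dstr, DstrI, Matrix.diagonal_mul_diagonal,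
    show (1 : Op N) = Matrix.diagonal (fun _ => 1) from Matrix.diagonal_one.symm]
  refine congrArg _ (funext fun v => ?_)
  rw [← Finset.prod_mul_distrib]
  exact Finset.prod_eq_one fun l _ => inv_mul_cancel₀ (Izval_ne_zero _)

lemma filter_lt_succ {j : ℕ} (hj : j < N) :
    Finset.univ.filter (fun l : Fin N => (l : ℕ) < j + 1)
      = insert (⟨j, hj⟩ : Fin N) (Finset.univ.filter (fun l : Fin N => (l : ℕ) < j)) := by
  ext l
  simp only [Finset.mem_filter, Finset.mem_insert, Finset.mem_univ, true_and, Fin.ext_iff]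
  omega

lemma Izval_diag {j : ℕ} (hj : j < N) :
    site N j (Complex.I • σz)
      = Matrix.diagonal (fun v : St N => Complex.I * zval (v ⟨j, hj⟩)) := by
  have h1 : Complex.I • σz = Matrix.diagonal (fun t => Complex.I * zval t) := by
    ext a b
    fin_cases a <;> fin_cases b <;> simp [σz, zval, Matrix.diagonal]
  rw [h1, site_diagonal hj]

lemma Izval_inv_diag {j : ℕ} (hj : j < N) :
    site N j ((-Complex.I) • σz)
      = Matrix.diagonal (fun v : St N => (Complex.I * zval (v ⟨j, hj⟩))⁻¹) := by
  have h1 : (-Complex.I) • σz = Matrix.diagonal (fun t => (Complex.I * zval t)⁻¹) := by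
    ext a b
    fin_cases a <;> fin_cases b <;>
      simp [σz, zval, Matrix.diagonal, Complex.inv_I, inv_neg] <;>
      norm_num [Complex.inv_I, inv_neg]
  rw [h1, site_diagonal hj]

lemma Dstr_succ {j : ℕ} (hj : j < N) :
    Dstr N (j+1) = Dstr N j * site N j (Complex.I • σz) := by
  rw [Izval_diag hj, Dstr, Dstr, Matrix.diagonal_mul_diagonal]
  refine congrArg _ (funext fun v => ?_)
  rw [filter_lt_succ hj, Finset.prod_insert (by simp), mul_comm]

lemma DstrI_succ {j : ℕ} (hj : j < N) :
    DstrI N (j+1) = DstrI N j * site N j ((-Complex.I) • σz) := by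
  rw [Izval_inv_diag hj, DstrI, DstrI, Matrix.diagonal_mul_diagonal]
  refine congrArg _ (funext fun v => ?_)
  rw [filter_lt_succ hj, Finset.prod_insert (by simp), mul_comm]

-- ## 2x2 matrix products

lemma one_fin2 : (1 : Matrix (Fin 2) (Fin 2) ℂ) = !![1,0;0,1] := by
  ext i j
  fin_cases i <;> fin_cases j <;> simp [Matrix.one_apply]

lemma mm_pm : σp * σm = nmat := by 
  ext a b
  fin_cases a <;> fin_cases b <;>
    simp [σp_eq, σm_eq, σz, nmat, Matrix.mul_apply, Fin.sum_univ_two, Matrix.one_apply]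

lemma mm_mp : σm * σp = 1 - nmat := by 
  ext a b
  fin_cases a <;> fin_cases b <;>
    simp [σp_eq, σm_eq, σz, nmat, Matrix.mul_apply, Fin.sum_univ_two, Matrix.one_apply]

lemma mm_pp : σp * σp = 0 := by 
  ext a b
  fin_cases a <;> fin_cases b <;>
    simp [σp_eq, σm_eq, σz, nmat, Matrix.mul_apply, Fin.sum_univ_two, Matrix.one_apply]

lemma mm_mm : σm * σm = 0 := by 
  ext a b
  fin_cases a <;> fin_cases b <;>
    simp [σp_eq, σm_eq, σz, nmat, Matrix.mul_apply, Fin.sum_univ_two, Matrix.one_apply]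

lemma mm_np : nmat * σp = σp := by 
  ext a b
  fin_cases a <;> fin_cases b <;>
    simp [σp_eq, σm_eq, σz, nmat, Matrix.mul_apply, Fin.sum_univ_two, Matrix.one_apply]

lemma mm_pn : σp * nmat = 0 := by 
  ext a b
  fin_cases a <;> fin_cases b <;>
    simp [σp_eq, σm_eq, σz, nmat, Matrix.mul_apply, Fin.sum_univ_two, Matrix.one_apply]

lemma mm_nm : nmat * σm = 0 := by 
  ext a b
  fin_cases a <;> fin_cases b <;>
    simp [σp_eq, σm_eq, σz, nmat, Matrix.mul_apply, Fin.sum_univ_two, Matrix.one_apply]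

lemma mm_mn : σm * nmat = σm := by 
  ext a b
  fin_cases a <;> fin_cases b <;>
    simp [σp_eq, σm_eq, σz, nmat, Matrix.mul_apply, Fin.sum_univ_two, Matrix.one_apply]

lemma mm_nn : nmat * nmat = nmat := by 
  ext a b
  fin_cases a <;> fin_cases b <;>
    simp [σp_eq, σm_eq, σz, nmat, Matrix.mul_apply, Fin.sum_univ_two, Matrix.one_apply]

lemma mm_mz : σm * (Complex.I • σz) = Complex.I • σm := by 
  ext a b
  fin_cases a <;> fin_cases b <;>
    simp [σp_eq, σm_eq, σz, nmat, Matrix.mul_apply, Fin.sum_univ_two, Matrix.one_apply]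

lemma mm_zp : ((-Complex.I) • σz) * σp = (-Complex.I) • σp := by 
  ext a b
  fin_cases a <;> fin_cases b <;>
    simp [σp_eq, σm_eq, σz, nmat, Matrix.mul_apply, Fin.sum_univ_two, Matrix.one_apply]


-- ## products of JW operators

lemma mul_left_swap {X Y Z : Op N} (h : X * Y = Y * X) : X * (Y * Z) = Y * (X * Z) := by
  rw [← mul_assoc, h, mul_assoc]

lemma ad_mul_an {j : ℕ} (hj : j < N) : ad N j * an N j = site N j nmat := by
  rw [ad_eq, an_eq, smul_mul_assoc, mul_smul_comm, smul_smul,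
    mul_inv_cancel₀ (pow_ne_zero _ Complex.I_ne_zero), one_smul]
  simp only [mul_assoc]
  rw [mul_left_swap (DstrI_comm_site hj le_rfl σp).symm,
    ← mul_assoc, Dstr_mul_DstrI, one_mul, site_mul_same, mm_pm]

lemma an_mul_ad_succ {j : ℕ} (hj : j + 1 < N) :
    an N j * ad N (j+1) = -(site N j σm * site N (j+1) σp) := by
  have hj' : j < N := by omega
  rw [ad_eq, an_eq, smul_mul_assoc, mul_smul_comm, smul_smul]
  have hsc : (Complex.I ^ j)⁻¹ * Complex.I ^ (j+1) = Complex.I := by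
    rw [pow_succ, ← mul_assoc, inv_mul_cancel₀ (pow_ne_zero _ Complex.I_ne_zero), one_mul]
  rw [hsc, Dstr_succ hj']
  simp only [mul_assoc]
  rw [mul_left_swap (Dstr_comm_site hj' le_rfl σm).symm,
    ← mul_assoc, DstrI_mul_Dstr, one_mul,
    ← mul_assoc, site_mul_same, mm_mz, site_smul, smul_mul_assoc, smul_smul,
    Complex.I_mul_I, neg_smul, one_smul]

lemma an_succ_mul_ad {j : ℕ} (hj : j + 1 < N) :
    an N (j+1) * ad N j = -(site N j σp * site N (j+1) σm) := by
  have hj' : j < N := by omega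
  rw [ad_eq, an_eq, smul_mul_assoc, mul_smul_comm, smul_smul]
  have hsc : (Complex.I ^ (j+1))⁻¹ * Complex.I ^ j = -Complex.I := by
    rw [pow_succ, mul_inv, mul_comm, ← mul_assoc,
      mul_inv_cancel₀ (pow_ne_zero _ Complex.I_ne_zero), one_mul, Complex.inv_I]
  rw [hsc, DstrI_succ hj']
  simp only [mul_assoc]
  rw [mul_left_swap (Dstr_comm_site hj (by omega) σm).symm,
    mul_left_swap (Dstr_comm_site hj' le_rfl ((-Complex.I) • σz)).symm,
    ← mul_assoc, DstrI_mul_Dstr, one_mul,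
    site_mul_comm (show j+1 ≠ j by omega) σm σp,
    ← mul_assoc, site_mul_same, mm_zp, site_smul, smul_mul_assoc, smul_smul]
  norm_num

lemma eTL_local {j : ℕ} (hj : j + 1 < N) :
    eTL N j = -(site N j σm * site N (j+1) σp) - site N j σp * site N (j+1) σm
      + Complex.I • (site N j nmat - site N (j+1) nmat) := by
  rw [eTL, an_mul_ad_succ hj, an_succ_mul_ad hj, ad_mul_an (by omega), ad_mul_an hj]
  abel

-- ## Temperley–Lieb relations

lemma commute_smul_left {X Y : Op N} (h : Commute X Y) (c : ℂ) : Commute (c • X) Y := by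
  unfold Commute SemiconjBy at *
  rw [smul_mul_assoc, h, mul_smul_comm]

lemma commute_smul_right {X Y : Op N} (h : Commute X Y) (c : ℂ) : Commute X (c • Y) := by
  unfold Commute SemiconjBy at *
  rw [mul_smul_comm, h, smul_mul_assoc]

lemma comm_far {i j : ℕ} (hij : i + 1 < j) (hj : j + 1 < N) :
    eTL N i * eTL N j = eTL N j * eTL N i := by
  have hi : i + 1 < N := by omega
  rw [eTL_local hi, eTL_local hj]
  have key : ∀ (a b : ℕ), (a = i ∨ a = i + 1) → (b = j ∨ b = j + 1) →
      ∀ (A B : Matrix (Fin 2) (Fin 2) ℂ), Commute (site N a A) (site N b B) := by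
    intro a b ha hb A B
    exact site_mul_comm (by omega) A B
  have L : ∀ (b : ℕ), (b = j ∨ b = j + 1) → ∀ (B : Matrix (Fin 2) (Fin 2) ℂ),
      Commute (-(site N i σm * site N (i+1) σp) - site N i σp * site N (i+1) σm
        + Complex.I • (site N i nmat - site N (i+1) nmat)) (site N b B) := by
    intro b hb B
    refine Commute.add_left (Commute.sub_left (Commute.neg_left ?_) ?_)
      (commute_smul_left (Commute.sub_left ?_ ?_) _)
    · exact Commute.mul_left (key i b (Or.inl rfl) hb _ _) (key (i+1) b (Or.inr rfl) hb _ _)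
    · exact Commute.mul_left (key i b (Or.inl rfl) hb _ _) (key (i+1) b (Or.inr rfl) hb _ _)
    · exact key i b (Or.inl rfl) hb _ _
    · exact key (i+1) b (Or.inr rfl) hb _ _
  exact Commute.add_right
    (Commute.sub_right
      (Commute.neg_right (Commute.mul_right (L j (Or.inl rfl) _) (L (j+1) (Or.inr rfl) _)))
      (Commute.mul_right (L j (Or.inl rfl) _) (L (j+1) (Or.inr rfl) _)))
    (commute_smul_right (Commute.sub_right (L j (Or.inl rfl) _) (L (j+1) (Or.inr rfl) _)) _)

lemma eTL_sq {j : ℕ} (hj : j + 1 < N) : eTL N j ^ 2 = 0 := by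
  have h1 : j < N := by omega
  have swap1 : ∀ (A B : Matrix (Fin 2) (Fin 2) ℂ),
      site N (j+1) A * site N j B = site N j B * site N (j+1) A :=
    fun A B => site_mul_comm (by omega) A B
  have swap1' : ∀ (A B : Matrix (Fin 2) (Fin 2) ℂ) (Z : Op N),
      site N (j+1) A * (site N j B * Z) = site N j B * (site N (j+1) A * Z) :=
    fun A B Z => mul_left_swap (swap1 A B)
  have colla : ∀ (A B : Matrix (Fin 2) (Fin 2) ℂ) (Z : Op N),
      site N j A * (site N j B * Z) = site N j (A * B) * Z :=
    fun A B Z => by rw [← mul_assoc, site_mul_same]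
  have collb : ∀ (A B : Matrix (Fin 2) (Fin 2) ℂ) (Z : Op N),
      site N (j+1) A * (site N (j+1) B * Z) = site N (j+1) (A * B) * Z :=
    fun A B Z => by rw [← mul_assoc, site_mul_same]
  rw [sq, eTL_local hj]
  simp only [mul_add, add_mul, mul_sub, sub_mul, mul_neg, neg_mul, smul_mul_assoc,
    mul_smul_comm, mul_assoc, swap1, swap1', colla, collb, site_mul_same,
    mm_pm, mm_mp, mm_pp, mm_mm, mm_np, mm_pn, mm_nm, mm_mn, mm_nn,
    site_sub, site_zero, site_one h1, site_one hj, smul_smul, Complex.I_mul_I,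
    mul_one, one_mul, mul_zero, zero_mul, smul_sub, smul_add, smul_zero, zero_smul,
    neg_smul, one_smul, sub_mul, mul_sub, neg_neg, neg_zero, sub_zero, zero_sub,
    add_zero, zero_add]
  module

lemma eTL_braid {j : ℕ} (hj : j + 1 + 1 < N) :
    eTL N j * eTL N (j+1) * eTL N j = eTL N j ∧
    eTL N (j+1) * eTL N j * eTL N (j+1) = eTL N (j+1) := by
  have h1 : j < N := by omega
  have h2 : j + 1 < N := by omega
  have swapba : ∀ (A B : Matrix (Fin 2) (Fin 2) ℂ),
      site N (j+1) A * site N j B = site N j B * site N (j+1) A :=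
    fun A B => site_mul_comm (by omega) A B
  have swapba' : ∀ (A B : Matrix (Fin 2) (Fin 2) ℂ) (Z : Op N),
      site N (j+1) A * (site N j B * Z) = site N j B * (site N (j+1) A * Z) :=
    fun A B Z => mul_left_swap (swapba A B)
  have swapca : ∀ (A B : Matrix (Fin 2) (Fin 2) ℂ),
      site N (j+1+1) A * site N j B = site N j B * site N (j+1+1) A :=
    fun A B => site_mul_comm (by omega) A B
  have swapca' : ∀ (A B : Matrix (Fin 2) (Fin 2) ℂ) (Z : Op N),
      site N (j+1+1) A * (site N j B * Z) = site N j B * (site N (j+1+1) A * Z) :=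
    fun A B Z => mul_left_swap (swapca A B)
  have swapcb : ∀ (A B : Matrix (Fin 2) (Fin 2) ℂ),
      site N (j+1+1) A * site N (j+1) B = site N (j+1) B * site N (j+1+1) A :=
    fun A B => site_mul_comm (by omega) A B
  have swapcb' : ∀ (A B : Matrix (Fin 2) (Fin 2) ℂ) (Z : Op N),
      site N (j+1+1) A * (site N (j+1) B * Z) = site N (j+1) B * (site N (j+1+1) A * Z) :=
    fun A B Z => mul_left_swap (swapcb A B)
  have colla : ∀ (A B : Matrix (Fin 2) (Fin 2) ℂ) (Z : Op N),
      site N j A * (site N j B * Z) = site N j (A * B) * Z :=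
    fun A B Z => by rw [← mul_assoc, site_mul_same]
  have collb : ∀ (A B : Matrix (Fin 2) (Fin 2) ℂ) (Z : Op N),
      site N (j+1) A * (site N (j+1) B * Z) = site N (j+1) (A * B) * Z :=
    fun A B Z => by rw [← mul_assoc, site_mul_same]
  have collc : ∀ (A B : Matrix (Fin 2) (Fin 2) ℂ) (Z : Op N),
      site N (j+1+1) A * (site N (j+1+1) B * Z) = site N (j+1+1) (A * B) * Z :=
    fun A B Z => by rw [← mul_assoc, site_mul_same]
  constructor <;>
  · rw [eTL_local (show j + 1 < N by omega), eTL_local (show (j+1) + 1 < N by omega)]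
    simp only [mul_add, add_mul, mul_sub, sub_mul, mul_neg, neg_mul, smul_mul_assoc,
      mul_smul_comm, mul_assoc, swapba, swapba', swapca, swapca', swapcb, swapcb',
      colla, collb, collc, site_mul_same,
      mm_pm, mm_mp, mm_pp, mm_mm, mm_np, mm_pn, mm_nm, mm_mn, mm_nn,
      site_sub, site_zero, site_one h1, site_one h2, site_one hj,
      smul_smul, Complex.I_mul_I,
      mul_one, one_mul, mul_zero, zero_mul, smul_sub, smul_add, smul_zero, zero_smul,
      neg_smul, one_smul, neg_neg, neg_zero, sub_zero, zero_sub, add_zero, zero_add]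
    match_scalars <;> (try ring) <;> ((try ring_nf); simp [Complex.I_sq]; try ring)

end Aux

end LatticeW
/-- Temperley–Lieb relations at zero fugacity for the XX densities. -/
theorem LatticeW.tl_relations_q_i (N : ℕ) (hN : 3 ≤ N) :
    (∀ j, j < N - 1 → eTL N j ^ 2 = 0) ∧
    (∀ j, j + 1 < N - 1 →
      eTL N j * eTL N (j+1) * eTL N j = eTL N j ∧
      eTL N (j+1) * eTL N j * eTL N (j+1) = eTL N (j+1)) ∧
    (∀ i j, i < N - 1 → j < N - 1 → 1 < Nat.dist i j →
      eTL N i * eTL N j = eTL N j * eTL N i) := by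
  refine ⟨fun j hj => eTL_sq (by omega), fun j hj => eTL_braid (by omega), ?_⟩
  intro i j hi hj hd
  rw [Nat.dist] at hd
  rcases Nat.lt_or_ge i j with h | h
  · exact comm_far (by omega) (by omega)
  · exact (comm_far (by omega) (by omega)).symm
end
end

section
/- For every even integer N ≥ 4, the zero modes are linearly dependent: Ĥ^N_0 = Σ_{r=0}^{N/2−1} (−1)^{N/2−r−1} S_{N/2−r}(cos²(π·0/N), cos²(π·1/N), …, cos²(π(N/2−1)/N)) Ĥ^{2r}_0, and for each α ∈ {+, 0, −}, Ŵ^{α,N−2}_0 = Σ_{r=0}^{N/2−2} (−1)^{N/2−r} S_{N/2−r−1}(cos²(π·1/N), cos²(π·2/N), …, cos²(π(N/2−1)/N)) Ŵ^{α,2r}_0, where S_r(x_1,…,x_k) denotes the r-th elementary symmetric polynomial. -/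
open Matrix Complex BigOperators Finset

noncomputable section

namespace LatticeW

open Polynomial in
private lemma rootA (s : Multiset ℂ) (x : ℂ) (hx : x ∈ s) :
    x ^ (Multiset.card s) =
      ∑ r ∈ Finset.range (Multiset.card s),
        ((-1:ℂ) ^ (Multiset.card s - r - 1) * s.esymm (Multiset.card s - r)) * x ^ r := by
  set P : ℂ[X] := (s.map fun t => X - C t).prod with hP
  have hdeg : P.natDegree = Multiset.card s :=
    Polynomial.natDegree_multiset_prod_X_sub_C_eq_card s
  have hmonic : P.Monic :=
    monic_multiset_prod_of_monic _ _ (fun t _ => monic_X_sub_C t)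
  have heval : P.eval x = 0 := by
    rw [hP, eval_multiset_prod]
    refine Multiset.prod_eq_zero ?_
    refine Multiset.mem_map.2 ⟨X - C x, Multiset.mem_map_of_mem _ hx, ?_⟩
    simp
  rw [eval_eq_sum_range, hdeg, Finset.sum_range_succ] at heval
  have hc : P.coeff (Multiset.card s) = 1 := by
    have := hmonic.coeff_natDegree
    rwa [hdeg] at this
  rw [hc, one_mul] at heval
  have hx' : x ^ Multiset.card s =
      ∑ r ∈ Finset.range (Multiset.card s), -(P.coeff r * x ^ r) := by
    rw [Finset.sum_neg_distrib]
    exact eq_neg_of_add_eq_zero_right heval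
  rw [hx']
  refine Finset.sum_congr rfl (fun r hr => ?_)
  have hrlt : r < Multiset.card s := Finset.mem_range.1 hr
  have hsgn : ((-1:ℂ))^(Multiset.card s - r) = -((-1:ℂ))^(Multiset.card s - r - 1) := by
    conv_lhs => rw [show Multiset.card s - r = (Multiset.card s - r - 1) + 1 from by omega]
    rw [pow_succ]
    ring
  rw [Multiset.prod_X_sub_C_coeff s hrlt.le, hsgn]
  ring

/-- `cos(πj/N)` as a complex number -/
def ccos (N : ℕ) (j : ℤ) : ℂ := ((Real.cos (Real.pi * (j:ℝ) / (N:ℝ)) : ℝ) : ℂ)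
/-- `sin(πj/N)` as a complex number -/
def csin (N : ℕ) (j : ℤ) : ℂ := ((Real.sin (Real.pi * (j:ℝ) / (N:ℝ)) : ℝ) : ℂ)

/-- the quadratic matrix pattern appearing in `Ŵ^α` at the diagonal -/
def Wmat (N : ℕ) (α : Fin 3) (j : ℤ) : Op N :=
  match α with
  | 0 => ηp N j * ηp N (-j)
  | 1 => ηp N j * ηm N (-j) + ηm N j * ηp N (-j)
  | 2 => ηm N j * ηm N (-j)

lemma Hhat_zero (N : ℕ) (hN : 4 ≤ N) (hev : Even N) (r : ℕ) :
    Hhat N r 0 = ∑ j ∈ modeRange N,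
      ((1 + (-1:ℂ)^r) * (sfun N j * sfun N (-j)) * ccos N j ^ r) • (ηp N j * ηm N (-j)) := by
  obtain ⟨M, hM⟩ := hev
  unfold Hhat
  refine Finset.sum_congr rfl (fun j1 hj1 => ?_)
  simp only [modeRange, Finset.mem_Icc] at hj1
  have hmem : -j1 ∈ modeRange N := by
    simp only [modeRange, Finset.mem_Icc]; omega
  have hN0 : (N:ℝ) ≠ 0 := Nat.cast_ne_zero.2 (by omega)
  refine (Finset.sum_eq_single_of_mem (-j1) hmem ?_).trans ?_
  · intro j2 hj2 hne
    simp only [modeRange, Finset.mem_Icc] at hj2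
    have hc0 : Hcoef N r 0 j1 j2 = 0 := by
      simp only [Hcoef, kδ, neg_zero, add_zero, sub_zero]
      rw [if_neg (show ¬(j1 + j2 = 0) from by omega),
        if_neg (show ¬(j1 - j2 = (N:ℤ)) from by omega),
        if_neg (show ¬(j1 - j2 = -(N:ℤ)) from by omega)]
      ring
    rw [hc0, mul_zero, zero_smul]
  · congr 1
    have harg : Real.pi * ((j1 - -j1 : ℤ):ℝ) / (2*(N:ℝ)) = Real.pi * (j1:ℝ) / (N:ℝ) := by
      push_cast
      field_simp
      ring
    have hcoef : Hcoef N r 0 j1 (-j1) = (1 + (-1:ℂ)^r) * ccos N j1 ^ r := by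
      simp only [Hcoef, kδ, neg_zero, add_zero, sub_zero]
      rw [if_pos (show j1 + -j1 = (0:ℤ) from by ring),
        if_neg (show ¬(j1 - -j1 = (N:ℤ)) from by omega),
        if_neg (show ¬(j1 - -j1 = -(N:ℤ)) from by omega), harg]
      unfold ccos
      ring
    rw [hcoef]
    ring

lemma What_zero (N : ℕ) (hN : 4 ≤ N) (hev : Even N) (α : Fin 3) (r : ℕ) :
    What N α r 0 = ∑ j ∈ modeRange N,
      ((1 + (-1:ℂ)^r) * (sfun N j * sfun N (-j)) * csin N j * ccos N j ^ r) • Wmat N α j := by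
  obtain ⟨M, hM⟩ := hev
  unfold What
  refine Finset.sum_congr rfl (fun j1 hj1 => ?_)
  simp only [modeRange, Finset.mem_Icc] at hj1
  have hmem : -j1 ∈ modeRange N := by
    simp only [modeRange, Finset.mem_Icc]; omega
  have hN0 : (N:ℝ) ≠ 0 := Nat.cast_ne_zero.2 (by omega)
  refine (Finset.sum_eq_single_of_mem (-j1) hmem ?_).trans ?_
  · intro j2 hj2 hne
    simp only [modeRange, Finset.mem_Icc] at hj2
    have hc0 : Ucoef N r 0 j1 j2 = 0 := by
      simp only [Ucoef, kδ, neg_zero, add_zero, sub_zero]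
      rw [if_neg (show ¬(j1 + j2 = 0) from by omega),
        if_neg (show ¬(j1 - j2 = -(N:ℤ)) from by omega)]
      ring
    rw [hc0, mul_zero, zero_smul]
  · congr 1
    have harg : Real.pi * ((j1 - -j1 : ℤ):ℝ) / (2*(N:ℝ)) = Real.pi * (j1:ℝ) / (N:ℝ) := by
      push_cast
      field_simp
      ring
    have hcoef : Ucoef N r 0 j1 (-j1) = (1 + (-1:ℂ)^r) * csin N j1 * ccos N j1 ^ r := by
      simp only [Ucoef, kδ, neg_zero, add_zero, sub_zero]
      rw [if_pos (show j1 + -j1 = (0:ℤ) from by ring),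
        if_neg (show ¬(j1 - -j1 = -(N:ℤ)) from by omega), harg]
      unfold ccos csin
      ring
    rw [hcoef]
    ring

end LatticeW

namespace LatticeW

lemma cos_natAbs (N : ℕ) (j : ℤ) :
    Real.cos (Real.pi * ((j.natAbs : ℕ):ℝ)/(N:ℝ)) ^ 2
      = Real.cos (Real.pi * (j:ℝ)/(N:ℝ)) ^ 2 := by
  have hca : ((j.natAbs : ℕ) : ℝ) = |(j:ℝ)| := by
    rw [Nat.cast_natAbs, Int.cast_abs]
  rw [hca]
  rcases abs_cases ((j:ℤ):ℝ) with ⟨h,_⟩|⟨h,_⟩ <;> rw [h]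
  rw [show Real.pi * (-((j:ℤ):ℝ))/(N:ℝ) = -(Real.pi * ((j:ℤ):ℝ)/(N:ℝ)) from by ring,
    Real.cos_neg]

lemma key1 (N : ℕ) (hN : 4 ≤ N) (hev : Even N) (j : ℤ) (hj : j ∈ modeRange N) :
    (1 + (-1:ℂ)^N) * (sfun N j * sfun N (-j)) * ccos N j ^ N
    = ∑ r ∈ Finset.range (N/2),
        ((-1 : ℂ) ^ (N/2 - r - 1) *
          (((Multiset.range (N/2)).map
              (fun t => ((Real.cos (Real.pi * (t : ℝ) / (N : ℝ)))^2 : ℂ))).esymm (N/2 - r)))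
        * ((1 + (-1:ℂ)^(2*r)) * (sfun N j * sfun N (-j)) * ccos N j ^ (2*r)) := by
  obtain ⟨M, hM⟩ := hev
  set s : Multiset ℂ := (Multiset.range (N/2)).map
      (fun t => ((Real.cos (Real.pi * (t : ℝ) / (N : ℝ)))^2 : ℂ)) with hs
  simp only [modeRange, Finset.mem_Icc] at hj
  have hcard : Multiset.card s = N/2 := by simp [hs]
  have hmem : ccos N j ^ 2 ∈ s := by
    rw [hs]
    refine Multiset.mem_map.2 ⟨((j.natAbs : ℕ) : ℝ), ?_, ?_⟩
    · have hlt : j.natAbs < N/2 := by omega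
      simp
      exact ⟨j.natAbs, hlt, by rw [Nat.cast_natAbs, Int.cast_abs]⟩
    have := cos_natAbs N j
    unfold ccos
    exact_mod_cast this
  have hroot := rootA s (ccos N j ^ 2) hmem
  rw [hcard] at hroot
  have hNeg : ((-1:ℂ))^N = 1 := (Even.neg_one_pow ⟨M, hM⟩)
  have hcN : ccos N j ^ N = (ccos N j ^ 2)^(N/2) := by
    rw [← pow_mul]; congr 1; omega
  rw [hNeg, hcN, hroot, Finset.mul_sum]
  refine Finset.sum_congr rfl (fun r hr => ?_)
  have e2 : ((-1:ℂ))^(2*r) = 1 := by rw [pow_mul]; norm_num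
  rw [e2, pow_mul]
  ring

lemma key2 (N : ℕ) (hN : 4 ≤ N) (hev : Even N) (j : ℤ) (hj : j ∈ modeRange N) :
    (1 + (-1:ℂ)^(N-2)) * (sfun N j * sfun N (-j)) * csin N j * ccos N j ^ (N-2)
    = ∑ r ∈ Finset.range (N/2 - 1),
        ((-1 : ℂ) ^ (N/2 - r) *
          (((Multiset.range (N/2 - 1)).map
              (fun t => ((Real.cos (Real.pi * ((t : ℝ) + 1) / (N : ℝ)))^2 : ℂ))).esymm (N/2 - r - 1)))
        * ((1 + (-1:ℂ)^(2*r)) * (sfun N j * sfun N (-j)) * csin N j * ccos N j ^ (2*r)) := by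
  obtain ⟨M, hM⟩ := hev
  by_cases hj0 : j = 0
  · have hsin : csin N j = 0 := by
      subst hj0
      unfold csin
      norm_num
    rw [hsin]
    simp
  set s : Multiset ℂ := (Multiset.range (N/2 - 1)).map
      (fun t => ((Real.cos (Real.pi * ((t : ℝ) + 1) / (N : ℝ)))^2 : ℂ)) with hs
  simp only [modeRange, Finset.mem_Icc] at hj
  have hcard : Multiset.card s = N/2 - 1 := by simp [hs]
  have h1le : 1 ≤ j.natAbs := Int.natAbs_pos.2 hj0
  have hmem : ccos N j ^ 2 ∈ s := by
    rw [hs]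
    refine Multiset.mem_map.2 ⟨((j.natAbs - 1 : ℕ) : ℝ), ?_, ?_⟩
    · have hlt : j.natAbs - 1 < N/2 - 1 := by omega
      simpa using hlt
    have ht1 : ((j.natAbs - 1 : ℕ) : ℝ) + 1 = ((j.natAbs : ℕ) : ℝ) := by
      rw [Nat.cast_sub h1le]; push_cast; ring
    rw [ht1]
    have := cos_natAbs N j
    unfold ccos
    exact_mod_cast this
  have hroot := rootA s (ccos N j ^ 2) hmem
  rw [hcard] at hroot
  have hNeg : ((-1:ℂ))^(N-2) = 1 := by
    rw [show N - 2 = 2*(N/2-1) from by omega, pow_mul]; norm_num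
  have hcN : ccos N j ^ (N-2) = (ccos N j ^ 2)^(N/2-1) := by
    rw [← pow_mul]; congr 1; omega
  rw [hNeg, hcN, hroot, Finset.mul_sum]
  refine Finset.sum_congr rfl (fun r hr => ?_)
  have hrlt : r < N/2 - 1 := Finset.mem_range.1 hr
  have e2 : ((-1:ℂ))^(2*r) = 1 := by rw [pow_mul]; norm_num
  have hsg : ((-1:ℂ))^(N/2 - 1 - r - 1) = ((-1:ℂ))^(N/2 - r) := by
    rw [show N/2 - r = (N/2 - 1 - r - 1) + 2 from by omega, pow_add]; norm_num
  have hes : N/2 - 1 - r = N/2 - r - 1 := by omega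
  rw [e2, pow_mul, hsg, hes]
  ring

end LatticeW

/-- linear dependence of the zero modes via elementary symmetric polynomials. -/
theorem LatticeW.zero_mode_linear_dependence (N : ℕ) (hN : 4 ≤ N) (hev : Even N) :
    (Hhat N N 0
      = ∑ r ∈ Finset.range (N/2),
          ((-1 : ℂ) ^ (N/2 - r - 1) *
            (((Multiset.range (N/2)).map
                (fun t => ((Real.cos (Real.pi * (t : ℝ) / (N : ℝ)))^2 : ℂ))).esymm (N/2 - r)))
            • Hhat N (2*r) 0) ∧
    (∀ α : Fin 3, What N α (N - 2) 0
      = ∑ r ∈ Finset.range (N/2 - 1),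
          ((-1 : ℂ) ^ (N/2 - r) *
            (((Multiset.range (N/2 - 1)).map
                (fun t => ((Real.cos (Real.pi * ((t : ℝ) + 1) / (N : ℝ)))^2 : ℂ))).esymm (N/2 - r - 1)))
            • What N α (2*r) 0) := by
  constructor
  · rw [Hhat_zero N hN hev N]
    have hR : ∀ r ∈ Finset.range (N/2),
        ((-1 : ℂ) ^ (N/2 - r - 1) *
          (((Multiset.range (N/2)).map
              (fun t => ((Real.cos (Real.pi * (t : ℝ) / (N : ℝ)))^2 : ℂ))).esymm (N/2 - r)))
          • Hhat N (2*r) 0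
        = ∑ j ∈ modeRange N,
            (((-1 : ℂ) ^ (N/2 - r - 1) *
              (((Multiset.range (N/2)).map
                  (fun t => ((Real.cos (Real.pi * (t : ℝ) / (N : ℝ)))^2 : ℂ))).esymm (N/2 - r)))
              * ((1 + (-1:ℂ)^(2*r)) * (sfun N j * sfun N (-j)) * ccos N j ^ (2*r)))
            • (ηp N j * ηm N (-j)) := by
      intro r _
      rw [Hhat_zero N hN hev (2*r), Finset.smul_sum]
      simp only [smul_smul]
    rw [Finset.sum_congr rfl hR, Finset.sum_comm]
    refine Finset.sum_congr rfl (fun j hj => ?_)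
    rw [← Finset.sum_smul]
    congr 1
    exact key1 N hN hev j hj
  · intro α
    rw [What_zero N hN hev α (N-2)]
    have hR : ∀ r ∈ Finset.range (N/2 - 1),
        ((-1 : ℂ) ^ (N/2 - r) *
          (((Multiset.range (N/2 - 1)).map
              (fun t => ((Real.cos (Real.pi * ((t : ℝ) + 1) / (N : ℝ)))^2 : ℂ))).esymm (N/2 - r - 1)))
          • What N α (2*r) 0
        = ∑ j ∈ modeRange N,
            (((-1 : ℂ) ^ (N/2 - r) *
              (((Multiset.range (N/2 - 1)).map
                  (fun t => ((Real.cos (Real.pi * ((t : ℝ) + 1) / (N : ℝ)))^2 : ℂ))).esymm (N/2 - r - 1)))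
              * ((1 + (-1:ℂ)^(2*r)) * (sfun N j * sfun N (-j)) * csin N j * ccos N j ^ (2*r)))
            • Wmat N α j := by
      intro r _
      rw [What_zero N hN hev α (2*r), Finset.smul_sum]
      simp only [smul_smul]
    rw [Finset.sum_congr rfl hR, Finset.sum_comm]
    refine Finset.sum_congr rfl (fun j hj => ?_)
    rw [← Finset.sum_smul]
    congr 1
    exact key2 N hN hev j hj
end
end
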